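/- Let θ ≥ 1 and B > 0, and consider two divisible agents with values v_1 = v_2 = 1. Call b ∈ [0,B]² θ-competitive if max(b_1,b_2) ≤ θ·min(b_1,b_2). Suppose x : [0,B]² → [0,1]² and p : [0,B]² → ℝ² satisfy, for all θ-competitive cost vectors: (1) truthfulness: for each agent i and all θ-competitive c, b ∈ [0,B]² differing only in coordinate i, p_i(c) − c_i·x_i(c) ≥ p_i(b) − c_i·x_i(b); (2) individual rationality: p_i(b) ≥ b_i·x_i(b) for all i and all θ-competitive b; (3) budget feasibility: p_1(b) + p_2(b) ≤ B for all θ-competitive b; and (4) γ-approximation for some γ ≥ 1: γ·(x_1(b) + x_2(b)) ≥ opt(b) for all θ-competitive b, where opt(b) := sup{ y_1 + y_2 : y ∈ [0,1]², b_1·y_1 + b_2·y_2 ≤ B }. Then γ ≥ (5θ² − 1)/(4θ²). -/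

import Mathlib

set_option maxHeartbeats 1000000

/-- Optimal fractional knapsack value for two unit-value divisible agents. -/
noncomputable def opt2 (B : ℝ) (b : Fin 2 → ℝ) : ℝ :=
  sSup { s : ℝ | ∃ y : Fin 2 → ℝ, (∀ i, y i ∈ Set.Icc (0:ℝ) 1) ∧
    (∑ i, b i * y i) ≤ B ∧ s = ∑ i, y i }

/-- With unit values, a two-agent cost vector is θ-competitive if
`max(b 0, b 1) ≤ θ * min(b 0, b 1)`. -/
def ThetaComp2 (θ : ℝ) (b : Fin 2 → ℝ) : Prop :=
  max (b 0) (b 1) ≤ θ * min (b 0) (b 1)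

lemma opt2_ge (B : ℝ) (b y : Fin 2 → ℝ) (hy : ∀ i, y i ∈ Set.Icc (0:ℝ) 1)
    (hc : (∑ i, b i * y i) ≤ B) : y 0 + y 1 ≤ opt2 B b := by
  have hmem : (y 0 + y 1) ∈ { s : ℝ | ∃ y : Fin 2 → ℝ, (∀ i, y i ∈ Set.Icc (0:ℝ) 1) ∧
      (∑ i, b i * y i) ≤ B ∧ s = ∑ i, y i } := by
    exact ⟨y, hy, hc, by rw [Fin.sum_univ_two]⟩
  have hbdd : BddAbove { s : ℝ | ∃ y : Fin 2 → ℝ, (∀ i, y i ∈ Set.Icc (0:ℝ) 1) ∧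
      (∑ i, b i * y i) ≤ B ∧ s = ∑ i, y i } := by
    refine ⟨2, ?_⟩
    rintro s ⟨z, hz, -, rfl⟩
    rw [Fin.sum_univ_two]
    have h0 := (hz 0).2
    have h1 := (hz 1).2
    linarith
  exact le_csSup hbdd hmem

/-- Lower bound of Section 4 / Appendix B of the paper (divisible case): on
θ-competitive instances, no deterministic truthful, individually rational, budget
feasible mechanism has an approximation guarantee better than (5θ²−1)/(4θ²). -/
theorem stmt_8 (θ B : ℝ) (hθ : 1 ≤ θ) (hB : 0 < B)
    (x p : (Fin 2 → ℝ) → (Fin 2 → ℝ)) (γ : ℝ) (hγ : 1 ≤ γ)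
    -- allocations lie in [0,1]²
    (hx : ∀ b : Fin 2 → ℝ, (∀ j, b j ∈ Set.Icc 0 B) → ∀ i, x b i ∈ Set.Icc (0:ℝ) 1)
    -- truthfulness on θ-competitive instances
    (htruth : ∀ (i : Fin 2) (c b : Fin 2 → ℝ), (∀ j, c j ∈ Set.Icc 0 B) →
      (∀ j, b j ∈ Set.Icc 0 B) → ThetaComp2 θ c → ThetaComp2 θ b →
      (∀ j, j ≠ i → c j = b j) →
      p c i - c i * x c i ≥ p b i - c i * x b i)
    -- individual rationality on θ-competitive instances
    (hir : ∀ b : Fin 2 → ℝ, (∀ j, b j ∈ Set.Icc 0 B) → ThetaComp2 θ b →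
      ∀ i, b i * x b i ≤ p b i)
    -- budget feasibility on θ-competitive instances
    (hbf : ∀ b : Fin 2 → ℝ, (∀ j, b j ∈ Set.Icc 0 B) → ThetaComp2 θ b →
      p b 0 + p b 1 ≤ B)
    -- γ-approximation on θ-competitive instances
    (happ : ∀ b : Fin 2 → ℝ, (∀ j, b j ∈ Set.Icc 0 B) → ThetaComp2 θ b →
      γ * (x b 0 + x b 1) ≥ opt2 B b) :
    γ ≥ (5 * θ^2 - 1) / (4 * θ^2) := by
  have hθ0 : (0:ℝ) < θ := lt_of_lt_of_le one_pos hθ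
  have hθ1 : (0:ℝ) < θ + 1 := by linarith
  -- opaque L, H with the needed properties
  obtain ⟨L, H, hL0, hH0, hLH, hHB, hsum, hHθL⟩ :
      ∃ L H : ℝ, 0 < L ∧ 0 < H ∧ L ≤ H ∧ H ≤ B ∧ L + H = B ∧ H = θ * L := by
    refine ⟨B / (θ + 1), θ * B / (θ + 1), div_pos hB hθ1,
      div_pos (mul_pos hθ0 hB) hθ1, ?_, ?_, ?_, ?_⟩
    · rw [div_le_div_iff₀ hθ1 hθ1]
      nlinarith [mul_nonneg (mul_nonneg (sub_nonneg.2 hθ) hB.le) hθ1.le]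
    · rw [div_le_iff₀ hθ1]; nlinarith
    · field_simp; ring
    · field_simp
  have hLB : L ≤ B := by linarith
  -- the three instances
  obtain ⟨cLH, hcLH0, hcLH1⟩ : ∃ c : Fin 2 → ℝ, c 0 = L ∧ c 1 = H :=
    ⟨![L, H], rfl, rfl⟩
  obtain ⟨cHL, hcHL0, hcHL1⟩ : ∃ c : Fin 2 → ℝ, c 0 = H ∧ c 1 = L :=
    ⟨![H, L], rfl, rfl⟩
  obtain ⟨cHH, hcHH0, hcHH1⟩ : ∃ c : Fin 2 → ℝ, c 0 = H ∧ c 1 = H :=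
    ⟨![H, H], rfl, rfl⟩
  have hmLH : ∀ j, cLH j ∈ Set.Icc (0:ℝ) B := by
    intro j; fin_cases j
    · rw [show (⟨0, by norm_num⟩ : Fin 2) = 0 from rfl, hcLH0]
      exact ⟨le_of_lt hL0, hLB⟩
    · rw [show (⟨1, by norm_num⟩ : Fin 2) = 1 from rfl, hcLH1]
      exact ⟨le_of_lt hH0, hHB⟩
  have hmHL : ∀ j, cHL j ∈ Set.Icc (0:ℝ) B := by
    intro j; fin_cases j
    · rw [show (⟨0, by norm_num⟩ : Fin 2) = 0 from rfl, hcHL0]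
      exact ⟨le_of_lt hH0, hHB⟩
    · rw [show (⟨1, by norm_num⟩ : Fin 2) = 1 from rfl, hcHL1]
      exact ⟨le_of_lt hL0, hLB⟩
  have hmHH : ∀ j, cHH j ∈ Set.Icc (0:ℝ) B := by
    intro j; fin_cases j
    · rw [show (⟨0, by norm_num⟩ : Fin 2) = 0 from rfl, hcHH0]
      exact ⟨le_of_lt hH0, hHB⟩
    · rw [show (⟨1, by norm_num⟩ : Fin 2) = 1 from rfl, hcHH1]
      exact ⟨le_of_lt hH0, hHB⟩
  have htcLH : ThetaComp2 θ cLH := by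
    show max (cLH 0) (cLH 1) ≤ θ * min (cLH 0) (cLH 1)
    rw [hcLH0, hcLH1, max_eq_right hLH, min_eq_left hLH]
    linarith [hHθL]
  have htcHL : ThetaComp2 θ cHL := by
    show max (cHL 0) (cHL 1) ≤ θ * min (cHL 0) (cHL 1)
    rw [hcHL0, hcHL1, max_eq_left hLH, min_eq_right hLH]
    linarith [hHθL]
  have htcHH : ThetaComp2 θ cHH := by
    show max (cHH 0) (cHH 1) ≤ θ * min (cHH 0) (cHH 1)
    rw [hcHH0, hcHH1, max_self, min_self]
    nlinarith
  -- allocations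
  have hz0 := hx cLH hmLH 0
  have hz1 := hx cLH hmLH 1
  have hw0 := hx cHL hmHL 0
  have hw1 := hx cHL hmHL 1
  have hu0 := hx cHH hmHH 0
  have hu1 := hx cHH hmHH 1
  -- opt lower bounds
  have hoptLH : (2:ℝ) ≤ opt2 B cLH := by
    have h := opt2_ge B cLH 1 (by intro i; exact ⟨zero_le_one, le_refl 1⟩)
      (by rw [Fin.sum_univ_two, hcLH0, hcLH1]; simp; linarith)
    simp only [Pi.one_apply] at h
    linarith
  have hoptHL : (2:ℝ) ≤ opt2 B cHL := by
    have h := opt2_ge B cHL 1 (by intro i; exact ⟨zero_le_one, le_refl 1⟩)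
      (by rw [Fin.sum_univ_two, hcHL0, hcHL1]; simp; linarith)
    simp only [Pi.one_apply] at h
    linarith
  have hoptHH : 1 + 1/θ ≤ opt2 B cHH := by
    obtain ⟨y, hy0, hy1⟩ : ∃ y : Fin 2 → ℝ, y 0 = 1 ∧ y 1 = 1/θ := ⟨![1, 1/θ], rfl, rfl⟩
    have hy : ∀ i, y i ∈ Set.Icc (0:ℝ) 1 := by
      intro i; fin_cases i
      · rw [show (⟨0, by norm_num⟩ : Fin 2) = 0 from rfl, hy0]
        exact ⟨zero_le_one, le_refl 1⟩
      · rw [show (⟨1, by norm_num⟩ : Fin 2) = 1 from rfl, hy1]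
        constructor
        · positivity
        · rw [div_le_one hθ0]; linarith
    have hcost : (∑ i, cHH i * y i) ≤ B := by
      rw [Fin.sum_univ_two, hcHH0, hcHH1, hy0, hy1, hHθL]
      have h1 : θ * L * (1/θ) = L := by field_simp
      rw [mul_one, h1]
      linarith
    have h := opt2_ge B cHH y hy hcost
    rw [hy0, hy1] at h
    linarith
  -- approximation inequalities
  have happLH : 2 ≤ γ * (x cLH 0 + x cLH 1) := le_trans hoptLH (happ cLH hmLH htcLH)
  have happHL : 2 ≤ γ * (x cHL 0 + x cHL 1) := le_trans hoptHL (happ cHL hmHL htcHL)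
  have happHH : 1 + 1/θ ≤ γ * (x cHH 0 + x cHH 1) := le_trans hoptHH (happ cHH hmHH htcHH)
  -- truthfulness: agent 0 with true cost L deviating to (H,H); agent 1 symmetric
  have hdev0 : p cLH 0 - cLH 0 * x cLH 0 ≥ p cHH 0 - cLH 0 * x cHH 0 :=
    htruth 0 cLH cHH hmLH hmHH htcLH htcHH
      (by intro j hj; fin_cases j
          · exact absurd rfl hj
          · rw [show (⟨1, by norm_num⟩ : Fin 2) = 1 from rfl, hcLH1, hcHH1])
  have hdev1 : p cHL 1 - cHL 1 * x cHL 1 ≥ p cHH 1 - cHL 1 * x cHH 1 :=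
    htruth 1 cHL cHH hmHL hmHH htcHL htcHH
      (by intro j hj; fin_cases j
          · rw [show (⟨0, by norm_num⟩ : Fin 2) = 0 from rfl, hcHL0, hcHH0]
          · exact absurd rfl hj)
  rw [hcLH0] at hdev0
  rw [hcHL1] at hdev1
  -- IR
  have hirHH0 : H * x cHH 0 ≤ p cHH 0 := by
    have h := hir cHH hmHH htcHH 0; rwa [hcHH0] at h
  have hirHH1 : H * x cHH 1 ≤ p cHH 1 := by
    have h := hir cHH hmHH htcHH 1; rwa [hcHH1] at h
  have hirLH1 : H * x cLH 1 ≤ p cLH 1 := by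
    have h := hir cLH hmLH htcLH 1; rwa [hcLH1] at h
  have hirHL0 : H * x cHL 0 ≤ p cHL 0 := by
    have h := hir cHL hmHL htcHL 0; rwa [hcHL0] at h
  -- budget
  have hbfLH : p cLH 0 + p cLH 1 ≤ B := hbf cLH hmLH htcLH
  have hbfHL : p cHL 0 + p cHL 1 ≤ B := hbf cHL hmHL htcHL
  -- key budget chains
  have chain1 : L * x cLH 0 + H * x cLH 1 + (H - L) * x cHH 0 ≤ B := by linarith
  have chain2 : H * x cHL 0 + L * x cHL 1 + (H - L) * x cHH 1 ≤ B := by linarith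
  have hHL0 : (0:ℝ) ≤ H - L := by linarith
  have s1 : H * (x cLH 0 + x cLH 1) + (H - L) * x cHH 0 ≤ B + (H - L) := by
    nlinarith [hz0.2, hHL0]
  have s2 : H * (x cHL 0 + x cHL 1) + (H - L) * x cHH 1 ≤ B + (H - L) := by
    nlinarith [hw1.2, hHL0]
  have hγ0 : (0:ℝ) ≤ γ := by linarith
  have t1 : γ * (H * (x cLH 0 + x cLH 1) + (H - L) * x cHH 0) ≤ γ * (B + (H - L)) :=
    mul_le_mul_of_nonneg_left s1 hγ0
  have t2 : γ * (H * (x cHL 0 + x cHL 1) + (H - L) * x cHH 1) ≤ γ * (B + (H - L)) :=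
    mul_le_mul_of_nonneg_left s2 hγ0
  have m1 : H * 2 ≤ H * (γ * (x cLH 0 + x cLH 1)) :=
    mul_le_mul_of_nonneg_left happLH (le_of_lt hH0)
  have m2 : H * 2 ≤ H * (γ * (x cHL 0 + x cHL 1)) :=
    mul_le_mul_of_nonneg_left happHL (le_of_lt hH0)
  have K1 : 2 * H + γ * ((H - L) * x cHH 0) ≤ γ * (B + (H - L)) := by nlinarith [t1, m1]
  have K2 : 2 * H + γ * ((H - L) * x cHH 1) ≤ γ * (B + (H - L)) := by nlinarith [t2, m2]
  have K3 : θ + 1 ≤ θ * (γ * (x cHH 0 + x cHH 1)) := by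
    have h := mul_le_mul_of_nonneg_left happHH (le_of_lt hθ0)
    have heq : θ * (1 + 1/θ) = θ + 1 := by field_simp
    linarith [h, heq.le, heq.ge]
  have K4 : (H - L) * (θ + 1) ≤ (H - L) * (θ * (γ * (x cHH 0 + x cHH 1))) :=
    mul_le_mul_of_nonneg_left K3 hHL0
  have final : 4 * θ * H + (H - L) * (θ + 1) ≤ 2 * θ * (γ * (B + (H - L))) := by
    nlinarith [K1, K2, K4, hθ0]
  have hfin2 : (5 * θ^2 - 1) * L ≤ 4 * θ^2 * γ * L := by
    have e1 : 4 * θ * H + (H - L) * (θ + 1) = (5 * θ^2 - 1) * L := by rw [hHθL]; ring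
    have e2 : 2 * θ * (γ * (B + (H - L))) = 4 * θ^2 * γ * L := by rw [← hsum, hHθL]; ring
    linarith [final, e1.le, e1.ge, e2.le, e2.ge]
  have hfin3 : (5 * θ^2 - 1) ≤ 4 * θ^2 * γ := (mul_le_mul_iff_of_pos_right hL0).mp hfin2
  rw [ge_iff_le, div_le_iff₀ (by positivity)]
  linarith
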